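/- Ordered-interval (oracle) representation of classical 3-chain correlations: a correlation p in the minimal 3-chain scenario belongs to S0 if and only if, setting p0 := sum_{b,c} p(1,b,c|0,0), p1 := sum_{b,c} p(1,b,c|1,0), r0 := sum_{a,b} p(a,b,1|0,0), r1 := sum_{a,b} p(a,b,1|0,1), there exist real numbers alpha, beta with max(0, p0 + p1 - 1) <= alpha <= min(p0, p1) and max(0, r0 + r1 - 1) <= beta <= min(r0, r1), and a measurable function g : [0,1]^2 -> [0,1], such that for all a,b,c,x,z in {0,1}: p(a,b,c|x,z) equals the integral over (l1,l2) in [0,1]^2 with respect to Lebesgue measure of 1[f_A(x,l1) = a] * h_b(l1,l2) * 1[f_C(z,l2) = c], where h_1 := g, h_0 := 1 - g, and the response functions are the explicit interval functions: f_A(0,l) = 1 iff l < p0; f_A(1,l) = 1 iff l < alpha or p0 <= l < p0 + p1 - alpha; f_C(0,l) = 1 iff l < r0; f_C(1,l) = 1 iff l < beta or r0 <= l < r0 + r1 - beta. -/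

import Mathlib

open Finset



open Finset

/-- A correlation in the minimal 3-chain scenario: `p a b c x z = p(a,b,c|x,z)`. -/
abbrev Corr : Type := Fin 2 → Fin 2 → Fin 2 → Fin 2 → Fin 2 → ℝ

/-- `p` is a valid correlation: nonnegative and normalized for every input pair. -/
def IsCorrelation (p : Corr) : Prop :=
  (∀ a b c x z, 0 ≤ p a b c x z) ∧
  (∀ x z, ∑ a : Fin 2, ∑ b : Fin 2, ∑ c : Fin 2, p a b c x z = 1)

/-- Probability weights on the finite set `Fin n`. -/
def IsWeights {n : ℕ} (q : Fin n → ℝ) : Prop :=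
  (∀ l, 0 ≤ q l) ∧ ∑ l, q l = 1

/-- A no-signalling box with binary outputs and input sets `X`, `Y`. -/
def IsNSBox {X Y : Type} [Fintype X] [Fintype Y]
    (nb : Fin 2 → Fin 2 → X → Y → ℝ) : Prop :=
  (∀ o1 o2 x y, 0 ≤ nb o1 o2 x y) ∧
  (∀ x y, ∑ o1 : Fin 2, ∑ o2 : Fin 2, nb o1 o2 x y = 1) ∧
  (∀ o1 x y y', ∑ o2 : Fin 2, nb o1 o2 x y = ∑ o2 : Fin 2, nb o1 o2 x y') ∧
  (∀ o2 x x' y, ∑ o1 : Fin 2, nb o1 o2 x y = ∑ o1 : Fin 2, nb o1 o2 x' y)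

/-- `S0`: classical 3-chain correlations. -/
def MemS0 (p : Corr) : Prop :=
  ∃ (n1 n2 : ℕ) (q1 : Fin n1 → ℝ) (q2 : Fin n2 → ℝ)
    (pA : Fin 2 → Fin 2 → Fin n1 → ℝ)
    (pB : Fin 2 → Fin n1 → Fin n2 → ℝ)
    (pC : Fin 2 → Fin 2 → Fin n2 → ℝ),
    IsWeights q1 ∧ IsWeights q2 ∧
    (∀ a x l1, 0 ≤ pA a x l1) ∧ (∀ x l1, ∑ a : Fin 2, pA a x l1 = 1) ∧
    (∀ b l1 l2, 0 ≤ pB b l1 l2) ∧ (∀ l1 l2, ∑ b : Fin 2, pB b l1 l2 = 1) ∧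
    (∀ c z l2, 0 ≤ pC c z l2) ∧ (∀ z l2, ∑ c : Fin 2, pC c z l2 = 1) ∧
    (∀ a b c x z, p a b c x z =
      ∑ l1, ∑ l2, q1 l1 * q2 l2 * pA a x l1 * pB b l1 l2 * pC c z l2)

/-- `S1^[AB^O BC^L]`: a no-signalling (OPT) source between Alice and Bob,
a classical source between Bob and Charlie. -/
def MemS1ABo (p : Corr) : Prop :=
  ∃ (n : ℕ) (q : Fin n → ℝ)
    (nb : Fin 2 → Fin 2 → Fin 2 → Fin n → ℝ)
    (pC : Fin 2 → Fin 2 → Fin n → ℝ),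
    IsWeights q ∧ IsNSBox nb ∧
    (∀ c z l, 0 ≤ pC c z l) ∧ (∀ z l, ∑ c : Fin 2, pC c z l = 1) ∧
    (∀ a b c x z, p a b c x z = ∑ l, q l * nb a b x l * pC c z l)

/-- `S1^[AB^L BC^O]`: a classical source between Alice and Bob,
a no-signalling (OPT) source between Bob and Charlie. -/
def MemS1BCo (p : Corr) : Prop :=
  ∃ (n : ℕ) (q : Fin n → ℝ)
    (pA : Fin 2 → Fin 2 → Fin n → ℝ)
    (nb : Fin 2 → Fin 2 → Fin n → Fin 2 → ℝ),
    IsWeights q ∧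
    (∀ a x l, 0 ≤ pA a x l) ∧ (∀ x l, ∑ a : Fin 2, pA a x l = 1) ∧
    IsNSBox nb ∧
    (∀ a b c x z, p a b c x z = ∑ l, q l * pA a x l * nb b c l z)

/-- `S2`: the no-signalling constraints of the 3-chain network. -/
def MemS2 (p : Corr) : Prop :=
  (∃ (pA : Fin 2 → Fin 2 → ℝ) (pC : Fin 2 → Fin 2 → ℝ),
    (∀ a x, 0 ≤ pA a x) ∧ (∀ x, ∑ a : Fin 2, pA a x = 1) ∧
    (∀ c z, 0 ≤ pC c z) ∧ (∀ z, ∑ c : Fin 2, pC c z = 1) ∧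
    (∀ a c x z, ∑ b : Fin 2, p a b c x z = pA a x * pC c z)) ∧
  (∀ a b x z z', ∑ c : Fin 2, p a b c x z = ∑ c : Fin 2, p a b c x z') ∧
  (∀ b c x x' z, ∑ a : Fin 2, p a b c x z = ∑ a : Fin 2, p a b c x' z)

open MeasureTheory

/-- `p0 = ∑_{b,c} p(1,b,c|0,0)`. -/
def margP0 (p : Corr) : ℝ := ∑ b : Fin 2, ∑ c : Fin 2, p 1 b c 0 0
/-- `p1 = ∑_{b,c} p(1,b,c|1,0)`. -/
def margP1 (p : Corr) : ℝ := ∑ b : Fin 2, ∑ c : Fin 2, p 1 b c 1 0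
/-- `r0 = ∑_{a,b} p(a,b,1|0,0)`. -/
def margR0 (p : Corr) : ℝ := ∑ a : Fin 2, ∑ b : Fin 2, p a b 1 0 0
/-- `r1 = ∑_{a,b} p(a,b,1|0,1)`. -/
def margR1 (p : Corr) : ℝ := ∑ a : Fin 2, ∑ b : Fin 2, p a b 1 0 1


namespace S0Oracle
open MeasureTheory Set

noncomputable section

/-- cumulative sums of a weight sequence -/
def cum (W : ℕ → ℝ) (k : ℕ) : ℝ := ∑ j ∈ Finset.range k, W j

/-- the `k`-th piece of the induced partition of `[0,1]` into `n` intervals -/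
def piece (W : ℕ → ℝ) (n k : ℕ) : Set ℝ :=
  if k + 1 = n then Set.Icc (cum W k) (cum W (k+1)) else Set.Ico (cum W k) (cum W (k+1))

lemma cum_zero (W : ℕ → ℝ) : cum W 0 = 0 := by simp [cum]

lemma cum_succ (W : ℕ → ℝ) (k : ℕ) : cum W (k+1) = cum W k + W k :=
  Finset.sum_range_succ W k

lemma cum_add (W : ℕ → ℝ) (a b : ℕ) :
    cum W (a + b) = cum W a + ∑ i ∈ Finset.range b, W (a + i) := by
  rw [cum, cum, ← Finset.sum_range_add_sum_Ico W (Nat.le_add_right a b),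
    Finset.sum_Ico_eq_sum_range]
  simp

lemma cum_mono {W : ℕ → ℝ} (hW : ∀ k, 0 ≤ W k) {j k : ℕ} (hjk : j ≤ k) :
    cum W j ≤ cum W k := by
  unfold cum
  apply Finset.sum_le_sum_of_subset_of_nonneg (Finset.range_subset_range.2 hjk)
  intro i _ _; exact hW i

lemma piece_subset_Icc (W : ℕ → ℝ) (n k : ℕ) :
    piece W n k ⊆ Set.Icc (cum W k) (cum W (k+1)) := by
  unfold piece; split
  · exact subset_rfl
  · exact Set.Ico_subset_Icc_self

lemma piece_subset_unit {W : ℕ → ℝ} {n : ℕ} (hW : ∀ k, 0 ≤ W k) (htot : cum W n = 1)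
    {k : ℕ} (hk : k < n) : piece W n k ⊆ Set.Icc (0:ℝ) 1 := by
  refine (piece_subset_Icc W n k).trans (Set.Icc_subset_Icc ?_ ?_)
  · rw [← cum_zero W]; exact cum_mono hW (Nat.zero_le k)
  · rw [← htot]; exact cum_mono hW hk

lemma measurableSet_piece (W : ℕ → ℝ) (n k : ℕ) : MeasurableSet (piece W n k) := by
  unfold piece; split
  · exact measurableSet_Icc
  · exact measurableSet_Ico

lemma volume_piece {W : ℕ → ℝ} {n : ℕ} (hW : ∀ k, 0 ≤ W k) {k : ℕ} :
    volume (piece W n k) = ENNReal.ofReal (W k) := by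
  have h : cum W (k+1) - cum W k = W k := by rw [cum_succ]; ring
  unfold piece; split
  · rw [Real.volume_Icc, h]
  · rw [Real.volume_Ico, h]

lemma volume_piece_toReal {W : ℕ → ℝ} {n : ℕ} (hW : ∀ k, 0 ≤ W k) {k : ℕ} :
    (volume (piece W n k)).toReal = W k := by
  rw [volume_piece hW, ENNReal.toReal_ofReal (hW k)]

lemma piece_disjoint {W : ℕ → ℝ} {n : ℕ} (hW : ∀ k, 0 ≤ W k) {j k : ℕ}
    (hjk : j < k) (hk : k < n) : Disjoint (piece W n j) (piece W n k) := by
  have hj : j + 1 ≠ n := by omega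
  rw [Set.disjoint_left]
  intro l hlj hlk
  have h1 : l < cum W (j+1) := by
    unfold piece at hlj; rw [if_neg hj] at hlj; exact hlj.2
  have h2 : cum W k ≤ l := ((piece_subset_Icc W n k) hlk).1
  have := cum_mono hW (show j + 1 ≤ k by omega) (W := W)
  linarith

lemma piece_disjoint' {W : ℕ → ℝ} {n : ℕ} (hW : ∀ k, 0 ≤ W k) {j k : ℕ}
    (hjk : j ≠ k) (hj : j < n) (hk : k < n) : Disjoint (piece W n j) (piece W n k) := by
  rcases Nat.lt_or_ge j k with h | h
  · exact piece_disjoint hW h hk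
  · exact (piece_disjoint hW (by omega) hj).symm

lemma exists_mem_piece {W : ℕ → ℝ} {n : ℕ} (hW : ∀ k, 0 ≤ W k) (htot : cum W n = 1)
    (hn : 0 < n) {l : ℝ} (hl : l ∈ Set.Icc (0:ℝ) 1) : ∃ k < n, l ∈ piece W n k := by
  classical
  obtain ⟨hl0, hl1⟩ := hl
  set K := Nat.findGreatest (fun k => cum W k ≤ l) n with hK
  have hKle : K ≤ n := Nat.findGreatest_le n
  have hKP : cum W K ≤ l := by
    exact Nat.findGreatest_spec (P := fun k => cum W k ≤ l) (Nat.zero_le n)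
      (show cum W 0 ≤ l by rw [cum_zero]; exact hl0)
  rcases eq_or_lt_of_le hKle with hKn | hKn
  · -- K = n : then l = 1, in last piece
    have h1 : cum W n ≤ l := by rw [← hKn]; exact hKP
    have hleq : l = 1 := le_antisymm hl1 (htot ▸ h1)
    refine ⟨n - 1, by omega, ?_⟩
    unfold piece
    rw [if_pos (by omega)]
    constructor
    · calc cum W (n-1) ≤ cum W n := cum_mono hW (by omega)
        _ = 1 := htot
        _ ≤ l := le_of_eq hleq.symm
    · have h2 : n - 1 + 1 = n := by omega
      rw [h2, htot, hleq]
  · refine ⟨K, hKn, ?_⟩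
    have hnot : ¬ ((fun k => cum W k ≤ l) (K+1)) :=
      Nat.findGreatest_is_greatest (P := fun k => cum W k ≤ l) (by rw [← hK]; omega) hKn
    simp only [] at hnot
    push_neg at hnot
    unfold piece; split
    · exact ⟨hKP, le_of_lt hnot⟩
    · exact ⟨hKP, hnot⟩

lemma integrableOn_indicator_const {s : Set ℝ} (hs : MeasurableSet s) (c : ℝ) :
    IntegrableOn (Set.indicator s (fun _ => c)) (Set.Icc (0:ℝ) 1) := by
  exact (integrableOn_const (by simp [Real.volume_Icc])).indicator hs

/-- a function which is constant on each piece integrates over `[0,1]` to the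
weighted sum of the constants. -/
lemma integral_Icc_step {W : ℕ → ℝ} {n : ℕ} (hW : ∀ k, 0 ≤ W k) (htot : cum W n = 1)
    (hn : 0 < n) {f : ℝ → ℝ} (c : ℕ → ℝ)
    (hstep : ∀ k < n, ∀ l ∈ piece W n k, f l = c k) :
    ∫ l in Set.Icc (0:ℝ) 1, f l = ∑ k ∈ Finset.range n, c k * W k := by
  have heq : Set.EqOn f
      (fun l => ∑ k ∈ Finset.range n, Set.indicator (piece W n k) (fun _ => c k) l)
      (Set.Icc (0:ℝ) 1) := by
    intro l hl
    obtain ⟨k0, hk0, hlk0⟩ := exists_mem_piece hW htot hn hl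
    show f l = ∑ k ∈ Finset.range n, Set.indicator (piece W n k) (fun _ => c k) l
    rw [Finset.sum_eq_single_of_mem k0 (Finset.mem_range.2 hk0)]
    · simp only [Set.indicator_of_mem hlk0]
      exact hstep k0 hk0 l hlk0
    · intro k hk hkk0
      apply Set.indicator_of_notMem
      intro hlk
      exact (Set.disjoint_left.1
        (piece_disjoint' hW hkk0 (Finset.mem_range.1 hk) hk0) hlk) hlk0
  rw [setIntegral_congr_fun measurableSet_Icc heq]
  rw [integral_finset_sum _ (fun k _ => integrableOn_indicator_const (measurableSet_piece W n k) (c k))]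
  apply Finset.sum_congr rfl
  intro k hk
  rw [setIntegral_indicator (measurableSet_piece W n k), setIntegral_const]
  rw [Set.inter_eq_self_of_subset_right (piece_subset_unit hW htot (Finset.mem_range.1 hk))]
  rw [measureReal_def, volume_piece hW, ENNReal.toReal_ofReal (hW k)]
  simp [mul_comm]

/-! ### threshold functions and response values -/

/-- thresholds `0, α, p0, p0+p1-α, 1` -/
def thr (p0 p1 α : ℝ) : ℕ → ℝ
  | 0 => 0
  | 1 => α
  | 2 => p0
  | 3 => p0 + p1 - α
  | _ => 1

/-- output of the deterministic response of type `t` on input `x` -/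
def av (x : Fin 2) (t : ℕ) : Fin 2 :=
  if x = 0 then (if t ≤ 1 then 1 else 0) else (if t = 0 ∨ t = 2 then 1 else 0)

/-- the interval response function takes the value `av x t` on the `t`-th type region. -/
lemma fval_eq {p0 p1 α : ℝ} (h0 : 0 ≤ α) (h1 : α ≤ p0) (h2 : α ≤ p1)
    (x : Fin 2) {t : ℕ} (ht : t < 4) {l : ℝ}
    (hl : thr p0 p1 α t ≤ l) (hl2 : t + 1 < 4 → l < thr p0 p1 α (t+1)) :
    (if x = 0 then (if l < p0 then (1 : Fin 2) else 0)
     else (if l < α ∨ (p0 ≤ l ∧ l < p0 + p1 - α) then (1 : Fin 2) else 0)) = av x t := by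
  fin_cases x <;>
  · interval_cases t <;>
      simp_all [thr, av] <;> first
        | (constructor <;> intro <;> linarith)
        | linarith
        | (intro; linarith)
        | (constructor; · linarith; · intro; linarith)

/-- coupling weights of the two-input deterministic strategies. -/
def mcp (u0 u1 : ℝ) : ℕ → ℝ
  | 0 => min u0 u1
  | 1 => u0 - min u0 u1
  | 2 => u1 - min u0 u1
  | _ => 1 - max u0 u1

lemma mcp_nonneg {u0 u1 : ℝ} (h00 : 0 ≤ u0) (h01 : u0 ≤ 1) (h10 : 0 ≤ u1) (h11 : u1 ≤ 1)
    (t : ℕ) : 0 ≤ mcp u0 u1 t := by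
  have hmin0 : 0 ≤ min u0 u1 := le_min h00 h10
  have hmax : max u0 u1 ≤ 1 := max_le h01 h11
  have : min u0 u1 ≤ u0 := min_le_left _ _
  have : min u0 u1 ≤ u1 := min_le_right _ _
  match t with
  | 0 => exact le_min h00 h10
  | 1 => simp only [mcp]; linarith [min_le_left u0 u1]
  | 2 => simp only [mcp]; linarith [min_le_right u0 u1]
  | (n+3) => simp only [mcp]; linarith

/-- marginal identity for the coupling: summing the indicator of output `a`
against the coupling weights recovers the single-input response probability. -/
lemma mcp_marginal {u0 u1 : ℝ} (x a : Fin 2) :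
    ∑ t ∈ Finset.range 4, (if av x t = a then (1:ℝ) else 0) * mcp u0 u1 t
      = if x = 0 then (if a = 1 then u0 else 1 - u0)
        else (if a = 1 then u1 else 1 - u1) := by
  have hmm : min u0 u1 + max u0 u1 = u0 + u1 := min_add_max u0 u1
  rw [show (4:ℕ) = 3+1 by rfl, Finset.sum_range_succ, Finset.sum_range_succ,
    Finset.sum_range_succ, Finset.sum_range_one]
  fin_cases x <;> fin_cases a <;> simp [av, mcp] <;> linarith

lemma sum_range_four (f : ℕ → ℝ) :
    ∑ t ∈ Finset.range 4, f t = f 0 + f 1 + f 2 + f 3 := by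
  rw [show (4:ℕ) = 3+1 by rfl, Finset.sum_range_succ, Finset.sum_range_succ,
    Finset.sum_range_succ, Finset.sum_range_one]

lemma biUnion_pieces {W : ℕ → ℝ} {n : ℕ} (hW : ∀ k, 0 ≤ W k) (htot : cum W n = 1)
    (hn : 0 < n) : Set.Icc (0:ℝ) 1 = ⋃ k ∈ Finset.range n, piece W n k := by
  apply Set.Subset.antisymm
  · intro l hl
    obtain ⟨k, hk, hlk⟩ := exists_mem_piece hW htot hn hl
    exact Set.mem_biUnion (Finset.mem_range.2 hk) hlk
  · intro l hl
    obtain ⟨k, hk, hlk⟩ := Set.mem_iUnion₂.1 hl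
    exact piece_subset_unit hW htot (Finset.mem_range.1 hk) hlk

lemma integral_Icc_parts {W : ℕ → ℝ} {n : ℕ} (hW : ∀ k, 0 ≤ W k) (htot : cum W n = 1)
    (hn : 0 < n) {f : ℝ → ℝ} (hf : IntegrableOn f (Set.Icc (0:ℝ) 1)) :
    ∫ l in Set.Icc (0:ℝ) 1, f l = ∑ k ∈ Finset.range n, ∫ l in piece W n k, f l := by
  rw [biUnion_pieces hW htot hn]
  exact integral_biUnion_finset _ (fun k _ => measurableSet_piece W n k)
    (fun j hj k hk hjk => piece_disjoint' hW hjk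
      (Finset.mem_range.1 (Finset.mem_coe.1 hj)) (Finset.mem_range.1 (Finset.mem_coe.1 hk)))
    (fun k hk => hf.mono_set (piece_subset_unit hW htot (Finset.mem_range.1 hk)))

lemma sum_if_fin2 (v : Fin 2) : ∑ a : Fin 2, (if v = a then (1:ℝ) else 0) = 1 := by
  fin_cases v <;> simp [Fin.sum_univ_two]

/-- the `Fin 2`-valued interval response function is measurable -/
lemma measurable_resp (p0 p1 α : ℝ) (x : Fin 2) :
    Measurable (fun l : ℝ => (if x = 0 then (if l < p0 then (1 : Fin 2) else 0)
      else (if l < α ∨ (p0 ≤ l ∧ l < p0 + p1 - α) then (1 : Fin 2) else 0))) := by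
  by_cases hx : x = 0
  · simp only [hx, if_true]
    exact Measurable.ite measurableSet_Iio measurable_const measurable_const
  · simp only [hx, if_false]
    refine Measurable.ite ?_ measurable_const measurable_const
    have : {l : ℝ | l < α ∨ (p0 ≤ l ∧ l < p0 + p1 - α)}
        = Set.Iio α ∪ (Set.Ici p0 ∩ Set.Iio (p0 + p1 - α)) := by
      ext l; simp [Set.mem_Iio, Set.mem_Ici, Set.mem_union, Set.mem_inter_iff]
    rw [this]
    exact measurableSet_Iio.union (measurableSet_Ici.inter measurableSet_Iio)

/-- the real indicator of the interval response function taking value `a` is measurable -/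
lemma measurable_ind (p0 p1 α : ℝ) (x a : Fin 2) :
    Measurable (fun l : ℝ =>
      (if (if x = 0 then (if l < p0 then (1 : Fin 2) else 0)
           else (if l < α ∨ (p0 ≤ l ∧ l < p0 + p1 - α) then (1 : Fin 2) else 0)) = a
       then (1:ℝ) else 0)) := by
  have h := measurable_resp p0 p1 α x
  exact Measurable.ite (h (measurableSet_singleton a)) measurable_const measurable_const

/-- weights of the 4-piece partition -/
def wfour (α p0 p1 : ℝ) : ℕ → ℝ
  | 0 => α
  | 1 => p0 - α
  | 2 => p1 - α
  | _ => 1 - (p0 + p1 - α)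

lemma wfour_nonneg {α p0 p1 : ℝ} (h0 : 0 ≤ α) (h1 : α ≤ p0) (h2 : α ≤ p1)
    (h3 : p0 + p1 - α ≤ 1) : ∀ k, 0 ≤ wfour α p0 p1 k := by
  intro k
  match k with
  | 0 => exact h0
  | 1 => simp only [wfour]; linarith
  | 2 => simp only [wfour]; linarith
  | (m+3) => simp only [wfour]; linarith

lemma cum_wfour (α p0 p1 : ℝ) {t : ℕ} (ht : t ≤ 4) :
    cum (wfour α p0 p1) t = thr p0 p1 α t := by
  interval_cases t <;>
    simp [cum, Finset.sum_range_succ, wfour, thr] <;> ring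

lemma cum_wfour_tot (α p0 p1 : ℝ) : cum (wfour α p0 p1) 4 = 1 :=
  cum_wfour α p0 p1 (le_refl 4)

/-- on the `k`-th piece of a partition refining the 4 type regions,
the response function takes the value `av x (k / n)`. -/
lemma piece_resp_gen {W : ℕ → ℝ} {n : ℕ} (hn : 0 < n) (hW : ∀ k, 0 ≤ W k)
    {p0 p1 α : ℝ} (h0 : 0 ≤ α) (h1 : α ≤ p0) (h2 : α ≤ p1)
    (hgrp : ∀ t ≤ 4, cum W (n*t) = thr p0 p1 α t)
    {k : ℕ} (hk : k < 4*n) {l : ℝ} (hl : l ∈ piece W (4*n) k) (x : Fin 2) :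
    (if x = 0 then (if l < p0 then (1 : Fin 2) else 0)
     else (if l < α ∨ (p0 ≤ l ∧ l < p0 + p1 - α) then (1 : Fin 2) else 0)) = av x (k / n) := by
  have hlk := piece_subset_Icc W (4*n) k hl
  have ht4 : k / n < 4 := Nat.div_lt_of_lt_mul (by omega)
  apply fval_eq h0 h1 h2 x ht4
  · calc thr p0 p1 α (k / n) = cum W (n * (k / n)) := (hgrp _ (le_of_lt ht4)).symm
      _ ≤ cum W k := cum_mono hW (Nat.mul_div_le k n)
      _ ≤ l := hlk.1
  · intro h4
    have hk1 : k + 1 ≤ n * (k / n + 1) := Nat.lt_mul_div_succ k hn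
    have hne : k + 1 ≠ 4 * n := by
      have : n * (k / n + 1) ≤ n * 3 := Nat.mul_le_mul_left n (by omega)
      omega
    have hlo : l < cum W (k+1) := by
      unfold piece at hl; rw [if_neg hne] at hl; exact hl.2
    calc l < cum W (k+1) := hlo
      _ ≤ cum W (n * (k / n + 1)) := cum_mono hW hk1
      _ = thr p0 p1 α (k / n + 1) := hgrp _ (by omega)

/-! ### auxiliary integrability lemmas -/

lemma integrableOn_of_bdd {f : ℝ → ℝ} {s : Set ℝ} (hs : volume s ≠ ⊤)
    (hf : Measurable f) {C : ℝ} (hb : ∀ l, |f l| ≤ C) : IntegrableOn f s :=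
  Measure.integrableOn_of_bounded hs hf.aestronglyMeasurable
    (Filter.Eventually.of_forall (by simpa [Real.norm_eq_abs] using hb))

lemma volume_piece_ne_top {W : ℕ → ℝ} {n k : ℕ} (hW : ∀ k, 0 ≤ W k) :
    volume (piece W n k) ≠ ⊤ := by
  rw [volume_piece hW]; exact ENNReal.ofReal_ne_top

lemma volume_Icc01_ne_top : volume (Set.Icc (0:ℝ) 1) ≠ ⊤ := by
  rw [Real.volume_Icc]; exact ENNReal.ofReal_ne_top

lemma wfour_le_one {α p0 p1 : ℝ} (h0 : 0 ≤ α) (h1 : α ≤ p0) (h2 : α ≤ p1)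
    (h3 : p0 + p1 - α ≤ 1) : ∀ k, wfour α p0 p1 k ≤ 1 := by
  intro k
  match k with
  | 0 => simp only [wfour]; linarith
  | 1 => simp only [wfour]; linarith
  | 2 => simp only [wfour]; linarith
  | (m+3) => simp only [wfour]; linarith

lemma abs_ite01 (P : Prop) [Decidable P] : |(if P then (1:ℝ) else 0)| ≤ 1 := by
  split <;> norm_num

/-! ### the backward direction -/

lemma backward {p : Corr} {p0 p1 r0 r1 α β : ℝ} {g : ℝ → ℝ → ℝ}
    (hα0 : 0 ≤ α) (hαp0 : α ≤ p0) (hαp1 : α ≤ p1) (hα1 : p0 + p1 - α ≤ 1)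
    (hβ0 : 0 ≤ β) (hβr0 : β ≤ r0) (hβr1 : β ≤ r1) (hβ1 : r0 + r1 - β ≤ 1)
    (hg : Measurable (Function.uncurry g))
    (hg01 : ∀ l1 l2, 0 ≤ g l1 l2 ∧ g l1 l2 ≤ 1)
    (hrep : ∀ a b c x z, p a b c x z =
      ∫ l1 in Set.Icc (0:ℝ) 1, ∫ l2 in Set.Icc (0:ℝ) 1,
        (if (if x = 0 then (if l1 < p0 then (1 : Fin 2) else 0)
             else (if l1 < α ∨ (p0 ≤ l1 ∧ l1 < p0 + p1 - α) then (1 : Fin 2) else 0)) = a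
         then (1:ℝ) else 0) *
        (if b = 1 then g l1 l2 else 1 - g l1 l2) *
        (if (if z = 0 then (if l2 < r0 then (1 : Fin 2) else 0)
             else (if l2 < β ∨ (r0 ≤ l2 ∧ l2 < r0 + r1 - β) then (1 : Fin 2) else 0)) = c
         then (1:ℝ) else 0)) :
    MemS0 p := by
  classical
  -- the two 4-piece partitions
  set WA : ℕ → ℝ := wfour α p0 p1 with hWAdef
  set WC : ℕ → ℝ := wfour β r0 r1 with hWCdef
  have hWA : ∀ k, 0 ≤ WA k := wfour_nonneg hα0 hαp0 hαp1 hα1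
  have hWC : ∀ k, 0 ≤ WC k := wfour_nonneg hβ0 hβr0 hβr1 hβ1
  have hWA1 : ∀ k, WA k ≤ 1 := wfour_le_one hα0 hαp0 hαp1 hα1
  have hWC1 : ∀ k, WC k ≤ 1 := wfour_le_one hβ0 hβr0 hβr1 hβ1
  have htotA : cum WA 4 = 1 := cum_wfour_tot α p0 p1
  have htotC : cum WC 4 = 1 := cum_wfour_tot β r0 r1
  have hgrpA : ∀ t ≤ 4, cum WA (1 * t) = thr p0 p1 α t := by
    intro t ht; rw [one_mul]; exact cum_wfour α p0 p1 ht
  have hgrpC : ∀ t ≤ 4, cum WC (1 * t) = thr r0 r1 β t := by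
    intro t ht; rw [one_mul]; exact cum_wfour β r0 r1 ht
  have h41 : (4 : ℕ) = 4 * 1 := by norm_num
  -- the response value on each piece
  have hrespA : ∀ k < 4, ∀ l ∈ piece WA 4 k, ∀ x : Fin 2,
      (if x = 0 then (if l < p0 then (1 : Fin 2) else 0)
       else (if l < α ∨ (p0 ≤ l ∧ l < p0 + p1 - α) then (1 : Fin 2) else 0)) = av x k := by
    intro k hk l hl x
    have := piece_resp_gen (n := 1) one_pos hWA hα0 hαp0 hαp1 hgrpA
      (k := k) (by omega) (h41 ▸ hl) x
    rwa [Nat.div_one] at this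
  have hrespC : ∀ k < 4, ∀ l ∈ piece WC 4 k, ∀ z : Fin 2,
      (if z = 0 then (if l < r0 then (1 : Fin 2) else 0)
       else (if l < β ∨ (r0 ≤ l ∧ l < r0 + r1 - β) then (1 : Fin 2) else 0)) = av z k := by
    intro k hk l hl z
    have := piece_resp_gen (n := 1) one_pos hWC hβ0 hβr0 hβr1 hgrpC
      (k := k) (by omega) (h41 ▸ hl) z
    rwa [Nat.div_one] at this
  -- the conditional middle distribution as a function of the outputs
  set hb : Fin 2 → ℝ → ℝ → ℝ := fun b l1 l2 => if b = 1 then g l1 l2 else 1 - g l1 l2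
    with hhbdef
  have hbm : ∀ b, Measurable (Function.uncurry (hb b)) := by
    intro b
    by_cases h : b = 1
    · simp only [hhbdef, h, if_true]
      exact hg
    · simp only [hhbdef, h, if_false]
      have : Function.uncurry (fun l1 l2 => 1 - g l1 l2)
          = fun q : ℝ × ℝ => 1 - Function.uncurry g q := rfl
      rw [this]
      exact measurable_const.sub hg
  have hbml : ∀ b l1, Measurable (fun l2 => hb b l1 l2) := by
    intro b l1
    exact (hbm b).comp (measurable_const.prodMk measurable_id)
  have hb01 : ∀ b l1 l2, 0 ≤ hb b l1 l2 ∧ hb b l1 l2 ≤ 1 := by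
    intro b l1 l2
    obtain ⟨h1, h2⟩ := hg01 l1 l2
    simp only [hhbdef]
    split <;> constructor <;> linarith
  have hbabs : ∀ b l1 l2, |hb b l1 l2| ≤ 1 := by
    intro b l1 l2
    obtain ⟨h1, h2⟩ := hb01 b l1 l2
    rw [abs_le]; constructor <;> linarith
  -- inner partial integrals
  set JF : Fin 2 → ℕ → ℝ → ℝ := fun b j l1 => ∫ l2 in piece WC 4 j, hb b l1 l2 with hJFdef
  have hJFm : ∀ b j, Measurable (JF b j) := by
    intro b j
    have := ((hbm b).stronglyMeasurable.integral_prod_right'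
      (ν := volume.restrict (piece WC 4 j)))
    exact this.measurable
  have hJFabs : ∀ b j, ∀ l1, |JF b j l1| ≤ 1 := by
    intro b j l1
    have h1 : ‖∫ l2 in piece WC 4 j, hb b l1 l2‖ ≤ 1 * (volume.restrict (piece WC 4 j) Set.univ).toReal := by
      haveI : IsFiniteMeasure (volume.restrict (piece WC 4 j)) := by
        constructor
        rw [Measure.restrict_apply_univ]
        exact lt_top_iff_ne_top.2 (volume_piece_ne_top hWC)
      apply norm_integral_le_of_norm_le_const
      exact Filter.Eventually.of_forall (fun l2 => by
        simpa [Real.norm_eq_abs] using hbabs b l1 l2)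
    rw [Measure.restrict_apply_univ, volume_piece hWC,
      ENNReal.toReal_ofReal (hWC j), one_mul] at h1
    calc |JF b j l1| = ‖∫ l2 in piece WC 4 j, hb b l1 l2‖ := by
          rw [Real.norm_eq_abs]
      _ ≤ WC j := h1
      _ ≤ 1 := hWC1 j
  have hbIntOn : ∀ b l1 (s : Set ℝ), volume s ≠ ⊤ → IntegrableOn (fun l2 => hb b l1 l2) s := by
    intro b l1 s hs
    exact integrableOn_of_bdd hs (hbml b l1) (fun l2 => hbabs b l1 l2)
  have hJFIntOn : ∀ b j (s : Set ℝ), volume s ≠ ⊤ → IntegrableOn (JF b j) s := by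
    intro b j s hs
    exact integrableOn_of_bdd hs (hJFm b j) (hJFabs b j)
  -- the rectangle integrals
  set RI : Fin 2 → ℕ → ℕ → ℝ := fun b i j => ∫ l1 in piece WA 4 i, JF b j l1 with hRIdef
  have hRInn : ∀ b i j, 0 ≤ RI b i j := by
    intro b i j
    apply setIntegral_nonneg (measurableSet_piece WA 4 i)
    intro l1 _
    apply setIntegral_nonneg (measurableSet_piece WC 4 j)
    intro l2 _
    exact (hb01 b l1 l2).1
  have hRIsum : ∀ i j, RI 0 i j + RI 1 i j = WA i * WC j := by
    intro i j
    have hJsum : ∀ l1, JF 0 j l1 + JF 1 j l1 = WC j := by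
      intro l1
      rw [hJFdef]
      simp only []
      rw [← integral_add (hbIntOn 0 l1 _ (volume_piece_ne_top hWC))
        (hbIntOn 1 l1 _ (volume_piece_ne_top hWC))]
      have : (fun l2 => hb 0 l1 l2 + hb 1 l1 l2) = fun _ => (1:ℝ) := by
        funext l2; simp only [hhbdef]; norm_num
      rw [this, setIntegral_const, measureReal_def, volume_piece hWC, ENNReal.toReal_ofReal (hWC j),
        smul_eq_mul, mul_one]
    rw [hRIdef]
    simp only []
    rw [← integral_add (hJFIntOn 0 j _ (volume_piece_ne_top hWA))
      (hJFIntOn 1 j _ (volume_piece_ne_top hWA))]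
    have : (fun l1 => JF 0 j l1 + JF 1 j l1) = fun _ => WC j := funext hJsum
    rw [this, setIntegral_const, measureReal_def, volume_piece hWA, ENNReal.toReal_ofReal (hWA i),
      smul_eq_mul]
  have hRIzero : ∀ b i j, WA i * WC j = 0 → RI b i j = 0 := by
    intro b i j h
    rcases mul_eq_zero.1 h with h | h
    · rw [hRIdef]
      simp only []
      have : volume (piece WA 4 i) = 0 := by rw [volume_piece hWA, h]; simp
      rw [Measure.restrict_eq_zero.2 this, integral_zero_measure]
    · have hJ0 : ∀ l1, JF b j l1 = 0 := by
        intro l1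
        rw [hJFdef]
        simp only []
        have : volume (piece WC 4 j) = 0 := by rw [volume_piece hWC, h]; simp
        rw [Measure.restrict_eq_zero.2 this, integral_zero_measure]
      rw [hRIdef]
      simp only []
      rw [funext hJ0]
      exact integral_zero _ _
  -- key identity
  have key : ∀ a b c x z : Fin 2, p a b c x z =
      ∑ i ∈ Finset.range 4, ∑ j ∈ Finset.range 4,
        (if av x i = a then (1:ℝ) else 0) * (if av z j = c then (1:ℝ) else 0) * RI b i j := by
    intro a b c x z
    rw [hrep a b c x z]
    set IA : ℝ → ℝ := fun l1 =>
      (if (if x = 0 then (if l1 < p0 then (1 : Fin 2) else 0)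
           else (if l1 < α ∨ (p0 ≤ l1 ∧ l1 < p0 + p1 - α) then (1 : Fin 2) else 0)) = a
       then (1:ℝ) else 0) with hIAdef
    set IC : ℝ → ℝ := fun l2 =>
      (if (if z = 0 then (if l2 < r0 then (1 : Fin 2) else 0)
           else (if l2 < β ∨ (r0 ≤ l2 ∧ l2 < r0 + r1 - β) then (1 : Fin 2) else 0)) = c
       then (1:ℝ) else 0) with hICdef
    have hIAm : Measurable IA := measurable_ind p0 p1 α x a
    have hICm : Measurable IC := measurable_ind r0 r1 β z c
    have hIAabs : ∀ l, |IA l| ≤ 1 := fun l => abs_ite01 _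
    have hICabs : ∀ l, |IC l| ≤ 1 := fun l => abs_ite01 _
    -- value of IA on the pieces
    have hIAval : ∀ i < 4, ∀ l1 ∈ piece WA 4 i, IA l1 = (if av x i = a then (1:ℝ) else 0) := by
      intro i hi l1 hl1
      rw [hIAdef]; simp only []
      rw [hrespA i hi l1 hl1 x]
    have hICval : ∀ j < 4, ∀ l2 ∈ piece WC 4 j, IC l2 = (if av z j = c then (1:ℝ) else 0) := by
      intro j hj l2 hl2
      rw [hICdef]; simp only []
      rw [hrespC j hj l2 hl2 z]
    -- inner integral
    have hinner : ∀ l1, (∫ l2 in Set.Icc (0:ℝ) 1, IA l1 * hb b l1 l2 * IC l2)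
        = IA l1 * ∑ j ∈ Finset.range 4, (if av z j = c then (1:ℝ) else 0) * JF b j l1 := by
      intro l1
      have h1 : (fun l2 => IA l1 * hb b l1 l2 * IC l2)
          = fun l2 => IA l1 * (hb b l1 l2 * IC l2) := by funext l2; ring
      rw [h1, integral_const_mul]
      congr 1
      have hint : IntegrableOn (fun l2 => hb b l1 l2 * IC l2) (Set.Icc (0:ℝ) 1) := by
        apply integrableOn_of_bdd volume_Icc01_ne_top ((hbml b l1).mul hICm) (C := 1)
        intro l2
        calc |hb b l1 l2 * IC l2| = |hb b l1 l2| * |IC l2| := abs_mul _ _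
          _ ≤ 1 * 1 := mul_le_mul (hbabs b l1 l2) (hICabs l2) (abs_nonneg _) zero_le_one
          _ = 1 := by norm_num
      rw [integral_Icc_parts hWC htotC (by norm_num) hint]
      apply Finset.sum_congr rfl
      intro j hj
      have hj4 : j < 4 := Finset.mem_range.1 hj
      have heqC : Set.EqOn (fun l2 => hb b l1 l2 * IC l2)
          (fun l2 => hb b l1 l2 * (if av z j = c then (1:ℝ) else 0)) (piece WC 4 j) := by
        intro l2 hl2
        simp only []
        rw [hICval j hj4 l2 hl2]
      rw [setIntegral_congr_fun (measurableSet_piece WC 4 j) heqC]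
      rw [integral_mul_const]
      rw [mul_comm]
    rw [setIntegral_congr_fun measurableSet_Icc (fun l1 _ => hinner l1)]
    have hGint : IntegrableOn
        (fun l1 => IA l1 * ∑ j ∈ Finset.range 4, (if av z j = c then (1:ℝ) else 0) * JF b j l1)
        (Set.Icc (0:ℝ) 1) := by
      apply integrableOn_of_bdd volume_Icc01_ne_top (C := 4)
      · apply hIAm.mul
        apply Finset.measurable_sum
        intro j _
        exact (hJFm b j).const_mul _
      · intro l1
        have hsum : |∑ j ∈ Finset.range 4, (if av z j = c then (1:ℝ) else 0) * JF b j l1| ≤ 4 := by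
          calc |∑ j ∈ Finset.range 4, (if av z j = c then (1:ℝ) else 0) * JF b j l1|
              ≤ ∑ j ∈ Finset.range 4, |(if av z j = c then (1:ℝ) else 0) * JF b j l1| :=
                Finset.abs_sum_le_sum_abs _ _
            _ ≤ ∑ j ∈ Finset.range 4, 1 := by
                apply Finset.sum_le_sum
                intro j _
                rw [abs_mul]
                calc |if av z j = c then (1:ℝ) else 0| * |JF b j l1|
                    ≤ 1 * 1 := by
                      apply mul_le_mul _ (hJFabs b j l1) (abs_nonneg _) zero_le_one
                      split <;> norm_num
                  _ = 1 := by norm_num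
            _ = 4 := by norm_num
        calc |IA l1 * ∑ j ∈ Finset.range 4, (if av z j = c then (1:ℝ) else 0) * JF b j l1|
            = |IA l1| * _ := abs_mul _ _
          _ ≤ 1 * 4 := mul_le_mul (hIAabs l1) hsum (abs_nonneg _) zero_le_one
          _ = 4 := by norm_num
    rw [integral_Icc_parts hWA htotA (by norm_num) hGint]
    apply Finset.sum_congr rfl
    intro i hi
    have hi4 : i < 4 := Finset.mem_range.1 hi
    have heqA : Set.EqOn
        (fun l1 => IA l1 * ∑ j ∈ Finset.range 4, (if av z j = c then (1:ℝ) else 0) * JF b j l1)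
        (fun l1 => (if av x i = a then (1:ℝ) else 0) *
          ∑ j ∈ Finset.range 4, (if av z j = c then (1:ℝ) else 0) * JF b j l1) (piece WA 4 i) := by
      intro l1 hl1
      simp only []
      rw [hIAval i hi4 l1 hl1]
    rw [setIntegral_congr_fun (measurableSet_piece WA 4 i) heqA]
    rw [integral_const_mul]
    rw [integral_finset_sum _ (fun j _ => ((hJFIntOn b j _ (volume_piece_ne_top hWA)).const_mul _))]
    rw [Finset.mul_sum]
    apply Finset.sum_congr rfl
    intro j _
    rw [integral_const_mul]
    rw [hRIdef]
    ring
  -- now build the finite classical model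
  refine ⟨4, 4, fun i => WA ↑i, fun j => WC ↑j,
    fun a x i => if av x ↑i = a then (1:ℝ) else 0,
    fun b i j => if WA ↑i * WC ↑j = 0 then 1/2 else RI b ↑i ↑j / (WA ↑i * WC ↑j),
    fun c z j => if av z ↑j = c then (1:ℝ) else 0,
    ⟨fun i => hWA ↑i, ?_⟩, ⟨fun j => hWC ↑j, ?_⟩,
    ?_, ?_, ?_, ?_, ?_, ?_, ?_⟩
  · rw [Fin.sum_univ_eq_sum_range (fun i => WA i) 4]; exact htotA
  · rw [Fin.sum_univ_eq_sum_range (fun j => WC j) 4]; exact htotC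
  · intro a x i; simp only []; split <;> norm_num
  · intro x i; exact sum_if_fin2 (av x ↑i)
  · intro b i j
    simp only []
    split
    · norm_num
    · exact div_nonneg (hRInn b ↑i ↑j) (mul_nonneg (hWA ↑i) (hWC ↑j))
  · intro i j
    rw [Fin.sum_univ_two]
    simp only []
    split
    · norm_num
    · rename_i h
      rw [← add_div, hRIsum ↑i ↑j, div_self h]
  · intro c z j; simp only []; split <;> norm_num
  · intro z j; exact sum_if_fin2 (av z ↑j)
  · intro a b c x z
    rw [key a b c x z]
    rw [Fin.sum_univ_eq_sum_range (fun i => ∑ l2 : Fin 4,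
      WA i * WC ↑l2 * (if av x i = a then (1:ℝ) else 0) *
        (if WA i * WC ↑l2 = 0 then 1/2 else RI b i ↑l2 / (WA i * WC ↑l2)) *
        (if av z ↑l2 = c then (1:ℝ) else 0)) 4]
    apply Finset.sum_congr rfl
    intro i hi
    rw [Fin.sum_univ_eq_sum_range (fun j =>
      WA i * WC j * (if av x i = a then (1:ℝ) else 0) *
        (if WA i * WC j = 0 then 1/2 else RI b i j / (WA i * WC j)) *
        (if av z j = c then (1:ℝ) else 0)) 4]
    apply Finset.sum_congr rfl
    intro j hj
    by_cases h : WA i * WC j = 0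
    · rw [if_pos h, hRIzero b i j h]
      rw [h]
      ring
    · rw [if_neg h]
      linear_combination (-((if av x i = a then (1:ℝ) else 0) * (if av z j = c then (1:ℝ) else 0) *
        RI b i j)) * mul_inv_cancel₀ h

/-! ### forward direction helpers -/

lemma sum_range_add' (f : ℕ → ℝ) (a b : ℕ) :
    ∑ k ∈ Finset.range (a + b), f k
      = ∑ k ∈ Finset.range a, f k + ∑ i ∈ Finset.range b, f (a + i) := by
  rw [← Finset.sum_range_add_sum_Ico f (Nat.le_add_right a b), Finset.sum_Ico_eq_sum_range]
  simp

lemma sum_range_four_mul (n : ℕ) (F : ℕ → ℝ) :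
    ∑ k ∈ Finset.range (4*n), F k
      = ∑ t ∈ Finset.range 4, ∑ i ∈ Finset.range n, F (n*t + i) := by
  rw [show 4*n = ((n+n)+n)+n by ring]
  rw [sum_range_add', sum_range_add', sum_range_add']
  rw [sum_range_four (fun t => ∑ i ∈ Finset.range n, F (n*t+i))]
  have e0 : ∀ i, n*0 + i = i := by intro i; ring
  have e1 : ∀ i, n*1 + i = n + i := by intro i; ring
  have e2 : ∀ i, n*2 + i = n + n + i := by intro i; ring
  have e3 : ∀ i, n*3 + i = n + n + n + i := by intro i; ring
  simp only [e0, e1, e2, e3]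

/-- extension of a `Fin n`-indexed family to `ℕ` -/
def extd {n : ℕ} (f : Fin n → ℝ) (d : ℝ) : ℕ → ℝ := fun i => if h : i < n then f ⟨i, h⟩ else d

lemma extd_coe {n : ℕ} (f : Fin n → ℝ) (d : ℝ) (l : Fin n) : extd f d ↑l = f l := by
  simp [extd]

/-- weights for the refined partition: group `t` of size `n`, weight
`q(i) * mcp(u0 i, u1 i, t)` for member `i`. -/
def wgen (n : ℕ) (Q U0 U1 : ℕ → ℝ) : ℕ → ℝ :=
  fun k => Q (k % n) * mcp (U0 (k % n)) (U1 (k % n)) (k / n)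

lemma wgen_apply {n : ℕ} (hn : 0 < n) (Q U0 U1 : ℕ → ℝ) (t i : ℕ) (hi : i < n) :
    wgen n Q U0 U1 (n*t + i) = Q i * mcp (U0 i) (U1 i) t := by
  unfold wgen
  rw [Nat.mul_add_mod, Nat.mod_eq_of_lt hi, Nat.mul_add_div hn, Nat.div_eq_of_lt hi,
    Nat.add_zero]

lemma wgen_group {n : ℕ} (hn : 0 < n) (Q U0 U1 : ℕ → ℝ) (t : ℕ) :
    cum (wgen n Q U0 U1) (n*(t+1))
      = cum (wgen n Q U0 U1) (n*t) + ∑ i ∈ Finset.range n, Q i * mcp (U0 i) (U1 i) t := by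
  rw [Nat.mul_succ, cum_add]
  congr 1
  exact Finset.sum_congr rfl (fun i hi => wgen_apply hn Q U0 U1 t i (Finset.mem_range.1 hi))

/-- summing a classical 3-chain model over the middle and right outputs. -/
lemma model_marg1 {n1 n2 : ℕ} (q1 : Fin n1 → ℝ) (q2 : Fin n2 → ℝ) (A : Fin n1 → ℝ)
    (pB : Fin 2 → Fin n1 → Fin n2 → ℝ) (C : Fin 2 → Fin n2 → ℝ)
    (hq2 : ∑ l, q2 l = 1) (hB : ∀ l1 l2, ∑ b : Fin 2, pB b l1 l2 = 1)
    (hC : ∀ l2, ∑ c : Fin 2, C c l2 = 1) :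
    ∑ b : Fin 2, ∑ c : Fin 2, ∑ l1, ∑ l2, q1 l1 * q2 l2 * A l1 * pB b l1 l2 * C c l2
      = ∑ l1, q1 l1 * A l1 := by
  have h1 : ∀ l1, (∑ l2, ∑ b : Fin 2, ∑ c : Fin 2,
      q1 l1 * q2 l2 * A l1 * pB b l1 l2 * C c l2) = q1 l1 * A l1 := by
    intro l1
    have h2 : ∀ l2, (∑ b : Fin 2, ∑ c : Fin 2,
        q1 l1 * q2 l2 * A l1 * pB b l1 l2 * C c l2) = q2 l2 * (q1 l1 * A l1) := by
      intro l2
      have hBs := hB l1 l2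
      have hCs := hC l2
      rw [Fin.sum_univ_two] at hBs hCs
      simp only [Fin.sum_univ_two]
      linear_combination (q1 l1 * q2 l2 * A l1 * C 0 l2 + q1 l1 * q2 l2 * A l1 * C 1 l2) * hBs
        + (q1 l1 * q2 l2 * A l1) * hCs
    rw [Finset.sum_congr rfl (fun l2 _ => h2 l2), ← Finset.sum_mul, hq2, one_mul]
  calc ∑ b : Fin 2, ∑ c : Fin 2, ∑ l1, ∑ l2, q1 l1 * q2 l2 * A l1 * pB b l1 l2 * C c l2
      = ∑ l1, ∑ l2, ∑ b : Fin 2, ∑ c : Fin 2,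
          q1 l1 * q2 l2 * A l1 * pB b l1 l2 * C c l2 := by
        simp only [Fin.sum_univ_two, ← Finset.sum_add_distrib]
    _ = ∑ l1, q1 l1 * A l1 := Finset.sum_congr rfl (fun l1 _ => h1 l1)

/-- summing a classical 3-chain model over the left and middle outputs. -/
lemma model_marg2 {n1 n2 : ℕ} (q1 : Fin n1 → ℝ) (q2 : Fin n2 → ℝ)
    (A : Fin 2 → Fin n1 → ℝ) (pB : Fin 2 → Fin n1 → Fin n2 → ℝ) (C : Fin n2 → ℝ)
    (hq1 : ∑ l, q1 l = 1) (hA : ∀ l1, ∑ a : Fin 2, A a l1 = 1)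
    (hB : ∀ l1 l2, ∑ b : Fin 2, pB b l1 l2 = 1) :
    ∑ a : Fin 2, ∑ b : Fin 2, ∑ l1, ∑ l2, q1 l1 * q2 l2 * A a l1 * pB b l1 l2 * C l2
      = ∑ l2, q2 l2 * C l2 := by
  have h1 : ∀ l2, (∑ l1, ∑ a : Fin 2, ∑ b : Fin 2,
      q1 l1 * q2 l2 * A a l1 * pB b l1 l2 * C l2) = q2 l2 * C l2 := by
    intro l2
    have h2 : ∀ l1, (∑ a : Fin 2, ∑ b : Fin 2,
        q1 l1 * q2 l2 * A a l1 * pB b l1 l2 * C l2) = q1 l1 * (q2 l2 * C l2) := by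
      intro l1
      have hAs := hA l1
      have hB0 := hB l1 l2
      rw [Fin.sum_univ_two] at hAs hB0
      simp only [Fin.sum_univ_two]
      linear_combination (q1 l1 * q2 l2 * C l2 * A 0 l1 + q1 l1 * q2 l2 * C l2 * A 1 l1) * hB0
        + (q1 l1 * q2 l2 * C l2) * hAs
    rw [Finset.sum_congr rfl (fun l1 _ => h2 l1), ← Finset.sum_mul, hq1, one_mul]
  calc ∑ a : Fin 2, ∑ b : Fin 2, ∑ l1, ∑ l2, q1 l1 * q2 l2 * A a l1 * pB b l1 l2 * C l2
      = ∑ l2, ∑ l1, ∑ a : Fin 2, ∑ b : Fin 2,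
          q1 l1 * q2 l2 * A a l1 * pB b l1 l2 * C l2 := by
        simp only [Fin.sum_univ_two, ← Finset.sum_add_distrib]
        rw [Finset.sum_comm]
    _ = ∑ l2, q2 l2 * C l2 := Finset.sum_congr rfl (fun l2 _ => h1 l2)

/-! ### the forward direction -/

lemma forward {p : Corr} (h : MemS0 p) :
    ∃ (α β : ℝ) (g : ℝ → ℝ → ℝ),
      max 0 (margP0 p + margP1 p - 1) ≤ α ∧ α ≤ min (margP0 p) (margP1 p) ∧
      max 0 (margR0 p + margR1 p - 1) ≤ β ∧ β ≤ min (margR0 p) (margR1 p) ∧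
      Measurable (Function.uncurry g) ∧
      (∀ l1 l2, 0 ≤ g l1 l2 ∧ g l1 l2 ≤ 1) ∧
      (∀ a b c x z, p a b c x z =
        ∫ l1 in Set.Icc (0 : ℝ) 1, ∫ l2 in Set.Icc (0 : ℝ) 1,
          (if (if x = 0 then (if l1 < margP0 p then (1 : Fin 2) else 0)
               else (if l1 < α ∨ (margP0 p ≤ l1 ∧ l1 < margP0 p + margP1 p - α)
                     then (1 : Fin 2) else 0)) = a then (1 : ℝ) else 0) *
            (if b = 1 then g l1 l2 else 1 - g l1 l2) *
            (if (if z = 0 then (if l2 < margR0 p then (1 : Fin 2) else 0)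
                 else (if l2 < β ∨ (margR0 p ≤ l2 ∧ l2 < margR0 p + margR1 p - β)
                       then (1 : Fin 2) else 0)) = c then (1 : ℝ) else 0)) := by
  classical
  obtain ⟨n1, n2, q1, q2, pA, pB, pC, ⟨hq1n, hq1s⟩, ⟨hq2n, hq2s⟩,
    hAn, hAs, hBn, hBs, hCn, hCs, hmod⟩ := h
  have hn1 : 0 < n1 := by
    rcases Nat.eq_zero_or_pos n1 with h0 | h0
    · subst h0; simp at hq1s
    · exact h0
  have hn2 : 0 < n2 := by
    rcases Nat.eq_zero_or_pos n2 with h0 | h0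
    · subst h0; simp at hq2s
    · exact h0
  have h4n1 : 0 < 4*n1 := by omega
  have h4n2 : 0 < 4*n2 := by omega
  -- ℕ-indexed data
  set Q1 : ℕ → ℝ := extd q1 0 with hQ1def
  set Q2 : ℕ → ℝ := extd q2 0 with hQ2def
  set U0 : ℕ → ℝ := extd (pA 1 0) 0 with hU0def
  set U1 : ℕ → ℝ := extd (pA 1 1) 0 with hU1def
  set V0 : ℕ → ℝ := extd (pC 1 0) 0 with hV0def
  set V1 : ℕ → ℝ := extd (pC 1 1) 0 with hV1def
  set PBN : Fin 2 → ℕ → ℕ → ℝ := fun b i j =>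
    if h : i < n1 ∧ j < n2 then pB b ⟨i, h.1⟩ ⟨j, h.2⟩ else (if b = 0 then 1 else 0)
    with hPBNdef
  have hQ1nn : ∀ i, 0 ≤ Q1 i := by
    intro i; rw [hQ1def]; unfold extd; split
    · exact hq1n _
    · exact le_rfl
  have hQ2nn : ∀ j, 0 ≤ Q2 j := by
    intro j; rw [hQ2def]; unfold extd; split
    · exact hq2n _
    · exact le_rfl
  have hpA1le : ∀ (x : Fin 2) (l : Fin n1), pA 1 x l ≤ 1 := by
    intro x l
    have h1 := hAs x l
    rw [Fin.sum_univ_two] at h1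
    linarith [hAn 0 x l]
  have hpC1le : ∀ (z : Fin 2) (l : Fin n2), pC 1 z l ≤ 1 := by
    intro z l
    have h1 := hCs z l
    rw [Fin.sum_univ_two] at h1
    linarith [hCn 0 z l]
  have hU0nn : ∀ i, 0 ≤ U0 i := by
    intro i; rw [hU0def]; unfold extd; split
    · exact hAn 1 0 _
    · exact le_rfl
  have hU0le : ∀ i, U0 i ≤ 1 := by
    intro i; rw [hU0def]; unfold extd; split
    · exact hpA1le 0 _
    · exact zero_le_one
  have hU1nn : ∀ i, 0 ≤ U1 i := by
    intro i; rw [hU1def]; unfold extd; split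
    · exact hAn 1 1 _
    · exact le_rfl
  have hU1le : ∀ i, U1 i ≤ 1 := by
    intro i; rw [hU1def]; unfold extd; split
    · exact hpA1le 1 _
    · exact zero_le_one
  have hV0nn : ∀ j, 0 ≤ V0 j := by
    intro j; rw [hV0def]; unfold extd; split
    · exact hCn 1 0 _
    · exact le_rfl
  have hV0le : ∀ j, V0 j ≤ 1 := by
    intro j; rw [hV0def]; unfold extd; split
    · exact hpC1le 0 _
    · exact zero_le_one
  have hV1nn : ∀ j, 0 ≤ V1 j := by
    intro j; rw [hV1def]; unfold extd; split
    · exact hCn 1 1 _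
    · exact le_rfl
  have hV1le : ∀ j, V1 j ≤ 1 := by
    intro j; rw [hV1def]; unfold extd; split
    · exact hpC1le 1 _
    · exact zero_le_one
  have hPBnn : ∀ b i j, 0 ≤ PBN b i j := by
    intro b i j; rw [hPBNdef]; simp only []
    split
    · exact hBn _ _ _
    · split <;> norm_num
  have hPBle : ∀ b i j, PBN b i j ≤ 1 := by
    intro b i j; rw [hPBNdef]; simp only []
    split
    · rename_i hij
      have h1 := Finset.single_le_sum (f := fun b' => pB b' ⟨i, hij.1⟩ ⟨j, hij.2⟩)
        (fun b' _ => hBn b' _ _) (Finset.mem_univ b)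
      rw [hBs ⟨i, hij.1⟩ ⟨j, hij.2⟩] at h1
      exact h1
    · split <;> norm_num
  have hPBsum : ∀ i j, PBN 0 i j + PBN 1 i j = 1 := by
    intro i j; rw [hPBNdef]; simp only []
    split
    · rename_i hij
      have h1 := hBs ⟨i, hij.1⟩ ⟨j, hij.2⟩
      rw [Fin.sum_univ_two] at h1
      exact h1
    · norm_num
  -- the weight sequences
  set WA : ℕ → ℝ := wgen n1 Q1 U0 U1 with hWAdef
  set WC : ℕ → ℝ := wgen n2 Q2 V0 V1 with hWCdef
  have hWAnn : ∀ k, 0 ≤ WA k := by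
    intro k
    exact mul_nonneg (hQ1nn _) (mcp_nonneg (hU0nn _) (hU0le _) (hU1nn _) (hU1le _) _)
  have hWCnn : ∀ k, 0 ≤ WC k := by
    intro k
    exact mul_nonneg (hQ2nn _) (mcp_nonneg (hV0nn _) (hV0le _) (hV1nn _) (hV1le _) _)
  -- the chosen α and β
  set α : ℝ := ∑ i ∈ Finset.range n1, Q1 i * mcp (U0 i) (U1 i) 0 with hαdef
  set β : ℝ := ∑ j ∈ Finset.range n2, Q2 j * mcp (V0 j) (V1 j) 0 with hβdef
  have hgrpA : ∀ t, cum WA (n1*(t+1))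
      = cum WA (n1*t) + ∑ i ∈ Finset.range n1, Q1 i * mcp (U0 i) (U1 i) t :=
    fun t => wgen_group hn1 Q1 U0 U1 t
  have hgrpC : ∀ t, cum WC (n2*(t+1))
      = cum WC (n2*t) + ∑ j ∈ Finset.range n2, Q2 j * mcp (V0 j) (V1 j) t :=
    fun t => wgen_group hn2 Q2 V0 V1 t
  -- marginals
  have hQ1tot : ∑ i ∈ Finset.range n1, Q1 i = 1 := by
    rw [← Fin.sum_univ_eq_sum_range (fun i => Q1 i) n1]
    rw [Finset.sum_congr rfl (fun l1 _ => by rw [hQ1def, extd_coe])]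
    exact hq1s
  have hQ2tot : ∑ j ∈ Finset.range n2, Q2 j = 1 := by
    rw [← Fin.sum_univ_eq_sum_range (fun j => Q2 j) n2]
    rw [Finset.sum_congr rfl (fun l2 _ => by rw [hQ2def, extd_coe])]
    exact hq2s
  have hP0 : margP0 p = ∑ i ∈ Finset.range n1, Q1 i * U0 i := by
    have h1 : margP0 p = ∑ l1, q1 l1 * pA 1 0 l1 := by
      unfold margP0
      simp only [hmod]
      exact model_marg1 q1 q2 (pA 1 0) pB (fun c l2 => pC c 0 l2) hq2s hBs (fun l2 => hCs 0 l2)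
    rw [h1, ← Fin.sum_univ_eq_sum_range (fun i => Q1 i * U0 i) n1]
    exact Finset.sum_congr rfl (fun l1 _ => by rw [hQ1def, hU0def, extd_coe, extd_coe])
  have hP1 : margP1 p = ∑ i ∈ Finset.range n1, Q1 i * U1 i := by
    have h1 : margP1 p = ∑ l1, q1 l1 * pA 1 1 l1 := by
      unfold margP1
      simp only [hmod]
      exact model_marg1 q1 q2 (pA 1 1) pB (fun c l2 => pC c 0 l2) hq2s hBs (fun l2 => hCs 0 l2)
    rw [h1, ← Fin.sum_univ_eq_sum_range (fun i => Q1 i * U1 i) n1]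
    exact Finset.sum_congr rfl (fun l1 _ => by rw [hQ1def, hU1def, extd_coe, extd_coe])
  have hR0 : margR0 p = ∑ j ∈ Finset.range n2, Q2 j * V0 j := by
    have h1 : margR0 p = ∑ l2, q2 l2 * pC 1 0 l2 := by
      unfold margR0
      simp only [hmod]
      exact model_marg2 q1 q2 (fun a l1 => pA a 0 l1) pB (fun l2 => pC 1 0 l2)
        hq1s (fun l1 => hAs 0 l1) hBs
    rw [h1, ← Fin.sum_univ_eq_sum_range (fun j => Q2 j * V0 j) n2]
    exact Finset.sum_congr rfl (fun l2 _ => by rw [hQ2def, hV0def, extd_coe, extd_coe])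
  have hR1 : margR1 p = ∑ j ∈ Finset.range n2, Q2 j * V1 j := by
    have h1 : margR1 p = ∑ l2, q2 l2 * pC 1 1 l2 := by
      unfold margR1
      simp only [hmod]
      exact model_marg2 q1 q2 (fun a l1 => pA a 0 l1) pB (fun l2 => pC 1 1 l2)
        hq1s (fun l1 => hAs 0 l1) hBs
    rw [h1, ← Fin.sum_univ_eq_sum_range (fun j => Q2 j * V1 j) n2]
    exact Finset.sum_congr rfl (fun l2 _ => by rw [hQ2def, hV1def, extd_coe, extd_coe])
  -- boundaries of the groups
  have hcA1 : cum WA (n1*1) = α := by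
    have h1 := hgrpA 0
    rw [Nat.mul_zero, cum_zero, zero_add] at h1
    rw [show n1*1 = n1*(0+1) by omega, h1, hαdef]
    ring
  have hcA2 : cum WA (n1*2) = margP0 p := by
    have h1 := hgrpA 1
    rw [show n1*2 = n1*(1+1) by omega, h1, hcA1, hP0, hαdef, ← Finset.sum_add_distrib]
    apply Finset.sum_congr rfl
    intro i _
    simp only [mcp]
    ring
  have hcA3 : cum WA (n1*3) = margP0 p + margP1 p - α := by
    have h1 := hgrpA 2
    rw [show n1*3 = n1*(2+1) by omega, h1, hcA2, hP1, hαdef]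
    have h2 : ∀ i ∈ Finset.range n1, Q1 i * mcp (U0 i) (U1 i) 2
        = Q1 i * U1 i - Q1 i * mcp (U0 i) (U1 i) 0 := by
      intro i _
      simp only [mcp]
      ring
    rw [Finset.sum_congr rfl h2, Finset.sum_sub_distrib]
    ring
  have hcA4 : cum WA (n1*4) = 1 := by
    have h1 := hgrpA 3
    rw [show n1*4 = n1*(3+1) by omega, h1, hcA3]
    have h2 : ∀ i ∈ Finset.range n1, Q1 i * mcp (U0 i) (U1 i) 3
        = Q1 i - Q1 i * U0 i - Q1 i * U1 i + Q1 i * mcp (U0 i) (U1 i) 0 := by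
      intro i _
      have hmx := min_add_max (U0 i) (U1 i)
      simp only [mcp]
      linear_combination (- Q1 i) * hmx
    rw [Finset.sum_congr rfl h2]
    rw [Finset.sum_add_distrib, Finset.sum_sub_distrib, Finset.sum_sub_distrib]
    rw [← hP0, ← hP1, ← hαdef, hQ1tot]
    ring
  have hcC1 : cum WC (n2*1) = β := by
    have h1 := hgrpC 0
    rw [Nat.mul_zero, cum_zero, zero_add] at h1
    rw [show n2*1 = n2*(0+1) by omega, h1, hβdef]
    ring
  have hcC2 : cum WC (n2*2) = margR0 p := by
    have h1 := hgrpC 1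
    rw [show n2*2 = n2*(1+1) by omega, h1, hcC1, hR0, hβdef, ← Finset.sum_add_distrib]
    apply Finset.sum_congr rfl
    intro j _
    simp only [mcp]
    ring
  have hcC3 : cum WC (n2*3) = margR0 p + margR1 p - β := by
    have h1 := hgrpC 2
    rw [show n2*3 = n2*(2+1) by omega, h1, hcC2, hR1, hβdef]
    have h2 : ∀ j ∈ Finset.range n2, Q2 j * mcp (V0 j) (V1 j) 2
        = Q2 j * V1 j - Q2 j * mcp (V0 j) (V1 j) 0 := by
      intro j _
      simp only [mcp]
      ring
    rw [Finset.sum_congr rfl h2, Finset.sum_sub_distrib]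
    ring
  have hcC4 : cum WC (n2*4) = 1 := by
    have h1 := hgrpC 3
    rw [show n2*4 = n2*(3+1) by omega, h1, hcC3]
    have h2 : ∀ j ∈ Finset.range n2, Q2 j * mcp (V0 j) (V1 j) 3
        = Q2 j - Q2 j * V0 j - Q2 j * V1 j + Q2 j * mcp (V0 j) (V1 j) 0 := by
      intro j _
      have hmx := min_add_max (V0 j) (V1 j)
      simp only [mcp]
      linear_combination (- Q2 j) * hmx
    rw [Finset.sum_congr rfl h2]
    rw [Finset.sum_add_distrib, Finset.sum_sub_distrib, Finset.sum_sub_distrib]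
    rw [← hR0, ← hR1, ← hβdef, hQ2tot]
    ring
  have hgrpA4 : ∀ t ≤ 4, cum WA (n1*t) = thr (margP0 p) (margP1 p) α t := by
    intro t ht
    interval_cases t
    · rw [Nat.mul_zero, cum_zero]; rfl
    · exact hcA1
    · exact hcA2
    · exact hcA3
    · exact hcA4
  have hgrpC4 : ∀ t ≤ 4, cum WC (n2*t) = thr (margR0 p) (margR1 p) β t := by
    intro t ht
    interval_cases t
    · rw [Nat.mul_zero, cum_zero]; rfl
    · exact hcC1
    · exact hcC2
    · exact hcC3
    · exact hcC4
  have htotA : cum WA (4*n1) = 1 := by rw [show 4*n1 = n1*4 by omega]; exact hcA4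
  have htotC : cum WC (4*n2) = 1 := by rw [show 4*n2 = n2*4 by omega]; exact hcC4
  -- the bounds on α and β
  have hα0 : 0 ≤ α := by
    rw [hαdef]
    exact Finset.sum_nonneg (fun i _ =>
      mul_nonneg (hQ1nn i) (mcp_nonneg (hU0nn i) (hU0le i) (hU1nn i) (hU1le i) 0))
  have hαp0 : α ≤ margP0 p := by
    rw [hαdef, hP0]
    apply Finset.sum_le_sum
    intro i _
    apply mul_le_mul_of_nonneg_left _ (hQ1nn i)
    show min (U0 i) (U1 i) ≤ U0 i
    exact min_le_left _ _
  have hαp1 : α ≤ margP1 p := by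
    rw [hαdef, hP1]
    apply Finset.sum_le_sum
    intro i _
    apply mul_le_mul_of_nonneg_left _ (hQ1nn i)
    show min (U0 i) (U1 i) ≤ U1 i
    exact min_le_right _ _
  have hαlow : margP0 p + margP1 p - 1 ≤ α := by
    have hpt : ∀ i ∈ Finset.range n1,
        Q1 i * U0 i + Q1 i * U1 i - Q1 i ≤ Q1 i * mcp (U0 i) (U1 i) 0 := by
      intro i _
      have h1 := hU0le i
      have h2 := hU1le i
      have hmin : U0 i + U1 i - 1 ≤ min (U0 i) (U1 i) := le_min (by linarith) (by linarith)
      have h3 := mul_le_mul_of_nonneg_left hmin (hQ1nn i)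
      show Q1 i * U0 i + Q1 i * U1 i - Q1 i ≤ Q1 i * min (U0 i) (U1 i)
      linarith [h3]
    have h := Finset.sum_le_sum hpt
    rw [Finset.sum_sub_distrib, Finset.sum_add_distrib] at h
    rw [hP0, hP1, hαdef]
    linarith [h, hQ1tot]
  have hβ0 : 0 ≤ β := by
    rw [hβdef]
    exact Finset.sum_nonneg (fun j _ =>
      mul_nonneg (hQ2nn j) (mcp_nonneg (hV0nn j) (hV0le j) (hV1nn j) (hV1le j) 0))
  have hβr0 : β ≤ margR0 p := by
    rw [hβdef, hR0]
    apply Finset.sum_le_sum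
    intro j _
    apply mul_le_mul_of_nonneg_left _ (hQ2nn j)
    show min (V0 j) (V1 j) ≤ V0 j
    exact min_le_left _ _
  have hβr1 : β ≤ margR1 p := by
    rw [hβdef, hR1]
    apply Finset.sum_le_sum
    intro j _
    apply mul_le_mul_of_nonneg_left _ (hQ2nn j)
    show min (V0 j) (V1 j) ≤ V1 j
    exact min_le_right _ _
  have hβlow : margR0 p + margR1 p - 1 ≤ β := by
    have hpt : ∀ j ∈ Finset.range n2,
        Q2 j * V0 j + Q2 j * V1 j - Q2 j ≤ Q2 j * mcp (V0 j) (V1 j) 0 := by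
      intro j _
      have h1 := hV0le j
      have h2 := hV1le j
      have hmin : V0 j + V1 j - 1 ≤ min (V0 j) (V1 j) := le_min (by linarith) (by linarith)
      have h3 := mul_le_mul_of_nonneg_left hmin (hQ2nn j)
      show Q2 j * V0 j + Q2 j * V1 j - Q2 j ≤ Q2 j * min (V0 j) (V1 j)
      linarith [h3]
    have h := Finset.sum_le_sum hpt
    rw [Finset.sum_sub_distrib, Finset.sum_add_distrib] at h
    rw [hR0, hR1, hβdef]
    linarith [h, hQ2tot]
  -- the middle response function
  set gF : ℝ → ℝ → ℝ := fun l1 l2 => ∑ k ∈ Finset.range (4*n1), ∑ m ∈ Finset.range (4*n2),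
    Set.indicator ((piece WA (4*n1) k) ×ˢ (piece WC (4*n2) m))
      (fun _ => PBN 1 (k % n1) (m % n2)) (l1, l2) with hgFdef
  have hgFm : Measurable (Function.uncurry gF) := by
    have h1 : Function.uncurry gF = fun q : ℝ × ℝ =>
        ∑ k ∈ Finset.range (4*n1), ∑ m ∈ Finset.range (4*n2),
          Set.indicator ((piece WA (4*n1) k) ×ˢ (piece WC (4*n2) m))
            (fun _ => PBN 1 (k % n1) (m % n2)) q := by
      funext q
      rw [hgFdef]
      rfl
    rw [h1]
    apply Finset.measurable_sum
    intro k _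
    apply Finset.measurable_sum
    intro m _
    exact measurable_const.indicator
      ((measurableSet_piece WA (4*n1) k).prod (measurableSet_piece WC (4*n2) m))
  have hgcov : ∀ k, k < 4*n1 → ∀ m, m < 4*n2 → ∀ l1 ∈ piece WA (4*n1) k,
      ∀ l2 ∈ piece WC (4*n2) m, gF l1 l2 = PBN 1 (k % n1) (m % n2) := by
    intro k hk m hm l1 hl1 l2 hl2
    rw [hgFdef]
    show (∑ k' ∈ Finset.range (4*n1), ∑ m' ∈ Finset.range (4*n2),
      Set.indicator ((piece WA (4*n1) k') ×ˢ (piece WC (4*n2) m'))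
        (fun _ => PBN 1 (k' % n1) (m' % n2)) (l1, l2)) = PBN 1 (k % n1) (m % n2)
    rw [Finset.sum_eq_single_of_mem k (Finset.mem_range.2 hk)]
    · rw [Finset.sum_eq_single_of_mem m (Finset.mem_range.2 hm)]
      · rw [Set.indicator_of_mem (Set.mem_prod.2 ⟨hl1, hl2⟩)]
      · intro m' hm' hne
        apply Set.indicator_of_notMem
        intro hmem
        exact (Set.disjoint_left.1
          (piece_disjoint' hWCnn hne (Finset.mem_range.1 hm') hm) hmem.2) hl2
    · intro k' hk' hne
      apply Finset.sum_eq_zero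
      intro m' _
      apply Set.indicator_of_notMem
      intro hmem
      exact (Set.disjoint_left.1
        (piece_disjoint' hWAnn hne (Finset.mem_range.1 hk') hk) hmem.1) hl1
  have hgzero : ∀ l1 l2, ((∀ k, k < 4*n1 → l1 ∉ piece WA (4*n1) k)
      ∨ (∀ m, m < 4*n2 → l2 ∉ piece WC (4*n2) m)) → gF l1 l2 = 0 := by
    intro l1 l2 hc
    rw [hgFdef]
    show (∑ k' ∈ Finset.range (4*n1), ∑ m' ∈ Finset.range (4*n2),
      Set.indicator ((piece WA (4*n1) k') ×ˢ (piece WC (4*n2) m'))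
        (fun _ => PBN 1 (k' % n1) (m' % n2)) (l1, l2)) = 0
    apply Finset.sum_eq_zero
    intro k' hk'
    apply Finset.sum_eq_zero
    intro m' hm'
    apply Set.indicator_of_notMem
    intro hmem
    rcases hc with hc | hc
    · exact hc k' (Finset.mem_range.1 hk') hmem.1
    · exact hc m' (Finset.mem_range.1 hm') hmem.2
  have hgF01 : ∀ l1 l2, 0 ≤ gF l1 l2 ∧ gF l1 l2 ≤ 1 := by
    intro l1 l2
    constructor
    · rw [hgFdef]
      apply Finset.sum_nonneg
      intro k _
      apply Finset.sum_nonneg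
      intro m _
      exact Set.indicator_nonneg (fun _ _ => hPBnn 1 _ _) _
    · by_cases hc1 : ∃ k, k < 4*n1 ∧ l1 ∈ piece WA (4*n1) k
      · obtain ⟨k, hk, hl1⟩ := hc1
        by_cases hc2 : ∃ m, m < 4*n2 ∧ l2 ∈ piece WC (4*n2) m
        · obtain ⟨m, hm, hl2⟩ := hc2
          rw [hgcov k hk m hm l1 hl1 l2 hl2]
          exact hPBle 1 _ _
        · push_neg at hc2
          rw [hgzero l1 l2 (Or.inr hc2)]
          exact zero_le_one
      · push_neg at hc1
        rw [hgzero l1 l2 (Or.inl hc1)]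
        exact zero_le_one
  have hbeval : ∀ (b : Fin 2), ∀ k, k < 4*n1 → ∀ m, m < 4*n2 → ∀ l1 ∈ piece WA (4*n1) k,
      ∀ l2 ∈ piece WC (4*n2) m,
      (if b = 1 then gF l1 l2 else 1 - gF l1 l2) = PBN b (k % n1) (m % n2) := by
    intro b k hk m hm l1 hl1 l2 hl2
    by_cases hb1 : b = 1
    · subst hb1
      rw [if_pos rfl, hgcov k hk m hm l1 hl1 l2 hl2]
    · have hb0 : b = 0 := by
        have hv : b.val ≠ 1 := fun hh => hb1 (Fin.ext hh)
        have hv2 := b.isLt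
        exact Fin.ext (by omega)
      subst hb0
      rw [if_neg hb1, hgcov k hk m hm l1 hl1 l2 hl2]
      linarith [hPBsum (k % n1) (m % n2)]
  -- conclude
  refine ⟨α, β, gF, max_le hα0 (by linarith), le_min hαp0 hαp1,
    max_le hβ0 (by linarith), le_min hβr0 hβr1, hgFm, hgF01, ?_⟩
  intro a b c x z
  -- inner integral evaluation
  have hinner : ∀ k, k < 4*n1 → ∀ l1 ∈ piece WA (4*n1) k,
      (∫ l2 in Set.Icc (0 : ℝ) 1,
        (if (if x = 0 then (if l1 < margP0 p then (1 : Fin 2) else 0)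
             else (if l1 < α ∨ (margP0 p ≤ l1 ∧ l1 < margP0 p + margP1 p - α)
                   then (1 : Fin 2) else 0)) = a then (1 : ℝ) else 0) *
          (if b = 1 then gF l1 l2 else 1 - gF l1 l2) *
          (if (if z = 0 then (if l2 < margR0 p then (1 : Fin 2) else 0)
               else (if l2 < β ∨ (margR0 p ≤ l2 ∧ l2 < margR0 p + margR1 p - β)
                     then (1 : Fin 2) else 0)) = c then (1 : ℝ) else 0))
      = (if av x (k / n1) = a then (1:ℝ) else 0) *
          ∑ m ∈ Finset.range (4*n2),
            (PBN b (k % n1) (m % n2) * (if av z (m / n2) = c then (1:ℝ) else 0)) * WC m := by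
    intro k hk l1 hl1
    rw [integral_Icc_step hWCnn htotC h4n2
      (fun m => (if av x (k / n1) = a then (1:ℝ) else 0) *
        (PBN b (k % n1) (m % n2) * (if av z (m / n2) = c then (1:ℝ) else 0)))
      ?_]
    · rw [Finset.mul_sum]
      apply Finset.sum_congr rfl
      intro m _
      ring
    · intro m hm l2 hl2
      rw [piece_resp_gen hn1 hWAnn hα0 hαp0 hαp1 hgrpA4 hk hl1 x,
        piece_resp_gen hn2 hWCnn hβ0 hβr0 hβr1 hgrpC4 hm hl2 z,
        hbeval b k hk m hm l1 hl1 l2 hl2]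
      ring
  have houter : (∫ l1 in Set.Icc (0 : ℝ) 1, ∫ l2 in Set.Icc (0 : ℝ) 1,
      (if (if x = 0 then (if l1 < margP0 p then (1 : Fin 2) else 0)
           else (if l1 < α ∨ (margP0 p ≤ l1 ∧ l1 < margP0 p + margP1 p - α)
                 then (1 : Fin 2) else 0)) = a then (1 : ℝ) else 0) *
        (if b = 1 then gF l1 l2 else 1 - gF l1 l2) *
        (if (if z = 0 then (if l2 < margR0 p then (1 : Fin 2) else 0)
             else (if l2 < β ∨ (margR0 p ≤ l2 ∧ l2 < margR0 p + margR1 p - β)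
                   then (1 : Fin 2) else 0)) = c then (1 : ℝ) else 0))
      = ∑ k ∈ Finset.range (4*n1),
          ((if av x (k / n1) = a then (1:ℝ) else 0) *
            ∑ m ∈ Finset.range (4*n2),
              (PBN b (k % n1) (m % n2) * (if av z (m / n2) = c then (1:ℝ) else 0)) * WC m)
            * WA k :=
    integral_Icc_step hWAnn htotA h4n1 _ hinner
  rw [houter, hmod a b c x z]
  -- now pure algebra
  have hSB : ∀ i, i < n1 →
      (∑ m ∈ Finset.range (4*n2),
        (PBN b i (m % n2) * (if av z (m / n2) = c then (1:ℝ) else 0)) * WC m)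
      = ∑ l2 : Fin n2, Q2 ↑l2 * PBN b i ↑l2 *
          (if z = 0 then (if c = 1 then V0 ↑l2 else 1 - V0 ↑l2)
           else (if c = 1 then V1 ↑l2 else 1 - V1 ↑l2)) := by
    intro i hi
    rw [sum_range_four_mul n2 _]
    rw [Finset.sum_comm]
    rw [← Fin.sum_univ_eq_sum_range (fun j => ∑ t ∈ Finset.range 4,
      (PBN b i ((n2*t+j) % n2) * (if av z ((n2*t+j) / n2) = c then (1:ℝ) else 0))
        * WC (n2*t+j)) n2]
    apply Finset.sum_congr rfl
    intro l2 _
    have hstep : ∀ t ∈ Finset.range 4,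
        (PBN b i ((n2*t+↑l2) % n2) * (if av z ((n2*t+↑l2) / n2) = c then (1:ℝ) else 0))
          * WC (n2*t+↑l2)
        = (Q2 ↑l2 * PBN b i ↑l2) * ((if av z t = c then (1:ℝ) else 0) * mcp (V0 ↑l2) (V1 ↑l2) t) := by
      intro t _
      rw [Nat.mul_add_mod, Nat.mod_eq_of_lt l2.isLt, Nat.mul_add_div hn2,
        Nat.div_eq_of_lt l2.isLt, Nat.add_zero, hWCdef,
        wgen_apply hn2 Q2 V0 V1 t ↑l2 l2.isLt]
      ring
    rw [Finset.sum_congr rfl hstep, ← Finset.mul_sum, mcp_marginal z c]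
  have hout2 : ∀ i ∈ Finset.range n1, ∀ t ∈ Finset.range 4,
      ((if av x ((n1*t+i) / n1) = a then (1:ℝ) else 0) *
        ∑ m ∈ Finset.range (4*n2),
          (PBN b ((n1*t+i) % n1) (m % n2) * (if av z (m / n2) = c then (1:ℝ) else 0)) * WC m)
        * WA (n1*t+i)
      = (Q1 i * (∑ l2 : Fin n2, Q2 ↑l2 * PBN b i ↑l2 *
          (if z = 0 then (if c = 1 then V0 ↑l2 else 1 - V0 ↑l2)
           else (if c = 1 then V1 ↑l2 else 1 - V1 ↑l2)))) *
        ((if av x t = a then (1:ℝ) else 0) * mcp (U0 i) (U1 i) t) := by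
    intro i hi t _
    have hii : i < n1 := Finset.mem_range.1 hi
    rw [Nat.mul_add_mod, Nat.mod_eq_of_lt hii, Nat.mul_add_div hn1,
      Nat.div_eq_of_lt hii, Nat.add_zero, hWAdef, wgen_apply hn1 Q1 U0 U1 t i hii,
      hSB i hii]
    ring
  rw [sum_range_four_mul n1 _]
  conv_rhs => rw [Finset.sum_comm]
  rw [Finset.sum_congr rfl (fun i hi => Finset.sum_congr rfl (fun t ht => hout2 i hi t ht))]
  have hfold : ∀ i ∈ Finset.range n1,
      (∑ t ∈ Finset.range 4, (Q1 i * (∑ l2 : Fin n2, Q2 ↑l2 * PBN b i ↑l2 *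
          (if z = 0 then (if c = 1 then V0 ↑l2 else 1 - V0 ↑l2)
           else (if c = 1 then V1 ↑l2 else 1 - V1 ↑l2)))) *
        ((if av x t = a then (1:ℝ) else 0) * mcp (U0 i) (U1 i) t))
      = (Q1 i * (∑ l2 : Fin n2, Q2 ↑l2 * PBN b i ↑l2 *
          (if z = 0 then (if c = 1 then V0 ↑l2 else 1 - V0 ↑l2)
           else (if c = 1 then V1 ↑l2 else 1 - V1 ↑l2)))) *
        (if x = 0 then (if a = 1 then U0 i else 1 - U0 i)
         else (if a = 1 then U1 i else 1 - U1 i)) := by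
    intro i _
    rw [← Finset.mul_sum, mcp_marginal x a]
  rw [Finset.sum_congr rfl hfold]
  rw [← Fin.sum_univ_eq_sum_range (fun i => (Q1 i * (∑ l2 : Fin n2, Q2 ↑l2 * PBN b i ↑l2 *
      (if z = 0 then (if c = 1 then V0 ↑l2 else 1 - V0 ↑l2)
       else (if c = 1 then V1 ↑l2 else 1 - V1 ↑l2)))) *
    (if x = 0 then (if a = 1 then U0 i else 1 - U0 i)
     else (if a = 1 then U1 i else 1 - U1 i))) n1]
  apply Finset.sum_congr rfl
  intro l1 _
  rw [Finset.mul_sum, Finset.sum_mul]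
  apply Finset.sum_congr rfl
  intro l2 _
  -- pointwise identification of the model terms
  have hQ1c : Q1 ↑l1 = q1 l1 := by rw [hQ1def, extd_coe]
  have hQ2c : Q2 ↑l2 = q2 l2 := by rw [hQ2def, extd_coe]
  have hPBc : PBN b ↑l1 ↑l2 = pB b l1 l2 := by
    rw [hPBNdef]
    simp only []
    rw [dif_pos ⟨l1.isLt, l2.isLt⟩]
  have hpAc : (if x = 0 then (if a = 1 then U0 ↑l1 else 1 - U0 ↑l1)
      else (if a = 1 then U1 ↑l1 else 1 - U1 ↑l1)) = pA a x l1 := by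
    have hA0 := hAs 0 l1
    have hA1 := hAs 1 l1
    rw [Fin.sum_univ_two] at hA0 hA1
    fin_cases a <;> fin_cases x <;>
      simp [hU0def, hU1def, extd_coe] <;> linarith
  have hpCc : (if z = 0 then (if c = 1 then V0 ↑l2 else 1 - V0 ↑l2)
      else (if c = 1 then V1 ↑l2 else 1 - V1 ↑l2)) = pC c z l2 := by
    have hC0 := hCs 0 l2
    have hC1 := hCs 1 l2
    rw [Fin.sum_univ_two] at hC0 hC1
    fin_cases c <;> fin_cases z <;>
      simp [hV0def, hV1def, extd_coe] <;> linarith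
  rw [hQ1c, hQ2c, hPBc, hpAc, hpCc]
  ring

end
end S0Oracle

/-- ordered-interval (oracle) representation of `S0`: `p ∈ S0` iff
there are `α`, `β` within the stated bounds and a measurable `g : [0,1]² → [0,1]`
such that `p` arises from the explicit interval response functions. -/
theorem s0_interval_oracle (p : Corr) (hp : IsCorrelation p) :
    MemS0 p ↔
    ∃ (α β : ℝ) (g : ℝ → ℝ → ℝ),
      max 0 (margP0 p + margP1 p - 1) ≤ α ∧ α ≤ min (margP0 p) (margP1 p) ∧
      max 0 (margR0 p + margR1 p - 1) ≤ β ∧ β ≤ min (margR0 p) (margR1 p) ∧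
      Measurable (Function.uncurry g) ∧
      (∀ l1 l2, 0 ≤ g l1 l2 ∧ g l1 l2 ≤ 1) ∧
      (∀ a b c x z, p a b c x z =
        ∫ l1 in Set.Icc (0 : ℝ) 1, ∫ l2 in Set.Icc (0 : ℝ) 1,
          (if (if x = 0 then (if l1 < margP0 p then (1 : Fin 2) else 0)
               else (if l1 < α ∨ (margP0 p ≤ l1 ∧ l1 < margP0 p + margP1 p - α)
                     then (1 : Fin 2) else 0)) = a then (1 : ℝ) else 0) *
            (if b = 1 then g l1 l2 else 1 - g l1 l2) *
            (if (if z = 0 then (if l2 < margR0 p then (1 : Fin 2) else 0)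
                 else (if l2 < β ∨ (margR0 p ≤ l2 ∧ l2 < margR0 p + margR1 p - β)
                       then (1 : Fin 2) else 0)) = c then (1 : ℝ) else 0)) := by
  constructor
  · exact fun h => S0Oracle.forward h
  · rintro ⟨α, β, g, h1, h2, h3, h4, hg, hg01, hrep⟩
    exact S0Oracle.backward
      (le_trans (le_max_left _ _) h1)
      (h2.trans (min_le_left _ _))
      (h2.trans (min_le_right _ _))
      (by have := (le_max_right (0:ℝ) _).trans h1; linarith)
      (le_trans (le_max_left _ _) h3)
      (h4.trans (min_le_left _ _))
      (h4.trans (min_le_right _ _))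
      (by have := (le_max_right (0:ℝ) _).trans h3; linarith)
      hg hg01 hrep
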